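/- arXiv:2303.05913 — 2 statements merged into one kernel-verified Lean document; each statement's English description precedes it below -/
import Mathlib

section
/- Let Q = (C_0, C_1, C_2, …) be a fixed nonnegative sequence with (1/(j+1)) ∑_{i=0}^{j} C_i bounded, let f_j ≥ 1 with ∏_{j=0}^∞ f_j² < ∞, let μ_j ≥ μ_0 ≥ 1, and let σ_j² ≥ 0 with ∑_{j=0}^∞ (j+1)² σ_j² < ∞. Then the double series Ξ̃ := ∑_{i₁,i₂=0}^∞ C_{i₁} C_{i₂} ∑_{j=max(i₁,i₂)}^∞ (σ_j²/μ_j) (∏_{l=max(i₁,i₂), l≠j}^∞ f_l²)(∏_{m=min(i₁,i₂)}^{max(i₁,i₂)−1} f_m) converges absolutely to a finite value. -/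
/-- Finite products of terms `≥ 1` are `≥ 1` (real version). -/
lemma xi_aux_one_le_prod {s : Finset ℕ} {g : ℕ → ℝ} (h : ∀ i, 1 ≤ g i) :
    1 ≤ ∏ i ∈ s, g i := by
  calc (1 : ℝ) = ∏ _i ∈ s, (1 : ℝ) := by simp
    _ ≤ ∏ i ∈ s, g i := Finset.prod_le_prod (by simp) (fun i _ => h i)

/-- Finite products of a multipliable sequence of terms `≥ 1` are bounded by the `tprod`. -/
lemma xi_aux_prod_le_tprod {g : ℕ → ℝ} (h1 : ∀ i, 1 ≤ g i) (hm : Multipliable g)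
    (s : Finset ℕ) : ∏ i ∈ s, g i ≤ ∏' i, g i := by
  refine ge_of_tendsto hm.hasProd (Filter.eventually_atTop.2 ⟨s, fun t hst => ?_⟩)
  rw [← Finset.prod_sdiff hst]
  have h2 : (1 : ℝ) ≤ ∏ i ∈ t \ s, g i := xi_aux_one_le_prod h1
  have h3 : (0 : ℝ) ≤ ∏ i ∈ s, g i := le_trans zero_le_one (xi_aux_one_le_prod h1)
  nlinarith

/-- Tail `tprod`s of a multipliable sequence of terms `≥ 1` are between `1` and the full
`tprod`. -/
lemma xi_aux_tail_tprod {g : ℕ → ℝ} (h1 : ∀ i, 1 ≤ g i) (hm : Multipliable g) (k : ℕ) :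
    1 ≤ (∏' l, g (k + l)) ∧ (∏' l, g (k + l)) ≤ ∏' i, g i := by
  by_cases h : Multipliable (fun l => g (k + l))
  · constructor
    · exact ge_of_tendsto' h.hasProd (fun s => xi_aux_one_le_prod (fun i => h1 (k + i)))
    · refine le_of_tendsto' h.hasProd (fun s => ?_)
      have hinj : Function.Injective (fun l => k + l) := fun a b hab => by
        simpa using hab
      have : ∏ l ∈ s, g (k + l) = ∏ i ∈ s.image (fun l => k + l), g i := by
        rw [Finset.prod_image (fun a _ b _ hab => hinj hab)]
      rw [this]
      exact xi_aux_prod_le_tprod h1 hm _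
  · rw [tprod_eq_one_of_not_multipliable h]
    refine ⟨le_refl 1, ?_⟩
    exact ge_of_tendsto' hm.hasProd (fun s => xi_aux_one_le_prod h1)

/-- Absolute convergence of the asymptotic conditional variance `Ξ̃` of the Mack bootstrap
estimation uncertainty part: for a nonnegative diagonal sequence `Cd` with bounded averages,
`f_j ≥ 1` with `∏ f_j² < ∞`, `μ_j ≥ 1`, `σ_j² ≥ 0` with `∑ (j+1)² σ_j² < ∞`, the double
series `∑_{i₁,i₂} Cd_{i₁} Cd_{i₂} ∑_{j≥max(i₁,i₂)} (σ_j²/μ_j)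
(∏_{l≥max, l≠j} f_l²)(∏_{m=min}^{max−1} f_m)` converges absolutely. -/
theorem xi_tilde_summable (Cd f μs σsq : ℕ → ℝ)
    (hC0 : ∀ i, 0 ≤ Cd i)
    (hCavg : ∃ M : ℝ, ∀ j, (∑ i ∈ Finset.range (j + 1), Cd i) / ((j : ℝ) + 1) ≤ M)
    (hf1 : ∀ j, 1 ≤ f j) (hfp : Multipliable (fun j => (f j) ^ 2))
    (hμ : ∀ j, 1 ≤ μs j)
    (hσ0 : ∀ j, 0 ≤ σsq j) (hσs : Summable (fun j : ℕ => ((j : ℝ) + 1) ^ 2 * σsq j)) :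
    Summable (fun p : ℕ × ℕ =>
      Cd p.1 * Cd p.2 *
        ∑' d : ℕ,
          (σsq (max p.1 p.2 + d) / μs (max p.1 p.2 + d)) *
            ((∏' l : ℕ, (f (max p.1 p.2 + l)) ^ 2) / (f (max p.1 p.2 + d)) ^ 2) *
            ∏ m ∈ Finset.Ico (min p.1 p.2) (max p.1 p.2), f m) := by
  classical
  obtain ⟨M, hM⟩ := hCavg
  have hg1 : ∀ j, (1 : ℝ) ≤ f j ^ 2 := fun j => one_le_pow₀ (hf1 j)
  set P : ℝ := ∏' j, (f j) ^ 2 with hP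
  have hP1 : (1 : ℝ) ≤ P := ge_of_tendsto' hfp.hasProd (fun s => xi_aux_one_le_prod hg1)
  have hP0 : (0 : ℝ) ≤ P := le_trans zero_le_one hP1
  -- σsq is summable, with summable tails
  have hσ : Summable σsq := by
    refine hσs.of_nonneg_of_le hσ0 (fun j => ?_)
    have h1 : (1 : ℝ) ≤ ((j : ℝ) + 1) ^ 2 := by nlinarith [Nat.cast_nonneg (α := ℝ) j]
    nlinarith [hσ0 j]
  have hσtail : ∀ k : ℕ, Summable (fun d => σsq (k + d)) := by
    intro k
    have := (summable_nat_add_iff (f := σsq) k).2 hσ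
    exact this.congr (fun d => by rw [add_comm])
  -- The tail sums
  set T : ℕ → ℝ := fun k => ∑' d, σsq (k + d) with hT
  -- M is nonnegative
  have hM0 : 0 ≤ M := le_trans (by simpa using hC0 0) (by simpa using hM 0)
  -- partial sums of Cd are bounded
  have hCsum : ∀ j : ℕ, ∑ i ∈ Finset.range (j + 1), Cd i ≤ M * ((j : ℝ) + 1) := by
    intro j
    have hj : (0 : ℝ) < (j : ℝ) + 1 := by positivity
    have := hM j
    rw [div_le_iff₀ hj] at this
    linarith
  -- key: Summable H where H p = Cd p.1 * Cd p.2 * T (max p.1 p.2)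
  have hH : Summable (fun p : ℕ × ℕ => Cd p.1 * Cd p.2 * T (max p.1 p.2)) := by
    have hT_ind : ∀ k : ℕ, T k = ∑' j : ℕ, (if k ≤ j then σsq j else 0) := by
      intro k
      have hinj : Function.Injective (fun d : ℕ => k + d) := fun a b hab => by
        simpa using hab
      have hsupp : Function.support (fun j => if k ≤ j then σsq j else 0) ⊆
          Set.range (fun d : ℕ => k + d) := by
        intro j hj
        by_cases h : k ≤ j
        · exact ⟨j - k, by simp; omega⟩
        · simp [h] at hj
      have := hinj.tsum_eq hsupp
      have hT' : T k = ∑' d : ℕ, σsq (k + d) := rfl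
      rw [hT', ← this]
      exact tsum_congr (fun d => by simp)
    have hTnn : ∀ k, 0 ≤ T k := fun k => tsum_nonneg (fun d => hσ0 _)
    refine summable_of_sum_le (c := M ^ 2 * ∑' j : ℕ, ((j : ℝ) + 1) ^ 2 * σsq j)
      (fun p => mul_nonneg (mul_nonneg (hC0 _) (hC0 _)) (hTnn _)) (fun u => ?_)
    -- rewrite each term as a tsum over j
    have hrw : ∀ p : ℕ × ℕ, Cd p.1 * Cd p.2 * T (max p.1 p.2) =
        ∑' j : ℕ, (if max p.1 p.2 ≤ j then Cd p.1 * Cd p.2 * σsq j else 0) := by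
      intro p
      rw [hT_ind, ← tsum_mul_left]
      congr 1; funext j
      by_cases h : max p.1 p.2 ≤ j <;> simp [h]
    have hsumm_p : ∀ p : ℕ × ℕ,
        Summable (fun j => if max p.1 p.2 ≤ j then Cd p.1 * Cd p.2 * σsq j else 0) := by
      intro p
      refine (hσ.mul_left (Cd p.1 * Cd p.2)).of_nonneg_of_le (fun j => ?_) (fun j => ?_)
      · by_cases h : max p.1 p.2 ≤ j <;>
          simp [h, mul_nonneg, hC0, hσ0, mul_nonneg (mul_nonneg (hC0 _) (hC0 _)) (hσ0 _)]
      · by_cases h : max p.1 p.2 ≤ j <;>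
          simp [h, mul_nonneg (mul_nonneg (hC0 _) (hC0 _)) (hσ0 _)]
    calc ∑ p ∈ u, Cd p.1 * Cd p.2 * T (max p.1 p.2)
        = ∑ p ∈ u, ∑' j : ℕ, (if max p.1 p.2 ≤ j then Cd p.1 * Cd p.2 * σsq j else 0) := by
          exact Finset.sum_congr rfl (fun p _ => hrw p)
      _ = ∑' j : ℕ, ∑ p ∈ u, (if max p.1 p.2 ≤ j then Cd p.1 * Cd p.2 * σsq j else 0) := by
          exact (Summable.tsum_finsetSum (fun p _ => hsumm_p p)).symm
      _ ≤ ∑' j : ℕ, M ^ 2 * (((j : ℝ) + 1) ^ 2 * σsq j) := by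
          refine Summable.tsum_le_tsum (fun j => ?_) (summable_sum (fun p _ => hsumm_p p))
            (hσs.mul_left (M ^ 2))
          -- fix j; bound the finite sum
          have hsub : u.filter (fun p : ℕ × ℕ => max p.1 p.2 ≤ j) ⊆
              Finset.range (j + 1) ×ˢ Finset.range (j + 1) := by
            intro p hp
            simp only [Finset.mem_filter] at hp
            simp only [Finset.mem_product, Finset.mem_range]
            omega
          calc ∑ p ∈ u, (if max p.1 p.2 ≤ j then Cd p.1 * Cd p.2 * σsq j else 0)
              = ∑ p ∈ u.filter (fun p : ℕ × ℕ => max p.1 p.2 ≤ j),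
                  Cd p.1 * Cd p.2 * σsq j := by
                rw [Finset.sum_filter]
            _ ≤ ∑ p ∈ Finset.range (j + 1) ×ˢ Finset.range (j + 1),
                  Cd p.1 * Cd p.2 * σsq j := by
                refine Finset.sum_le_sum_of_subset_of_nonneg hsub (fun p _ _ => ?_)
                exact mul_nonneg (mul_nonneg (hC0 _) (hC0 _)) (hσ0 _)
            _ = (∑ i ∈ Finset.range (j + 1), Cd i) * (∑ i ∈ Finset.range (j + 1), Cd i)
                  * σsq j := by
                rw [Finset.sum_mul_sum, Finset.sum_product]
                simp [Finset.sum_mul]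
            _ ≤ M ^ 2 * (((j : ℝ) + 1) ^ 2 * σsq j) := by
                have h1 := hCsum j
                have h2 : (0 : ℝ) ≤ ∑ i ∈ Finset.range (j + 1), Cd i :=
                  Finset.sum_nonneg (fun i _ => hC0 i)
                have hj : (0 : ℝ) ≤ M * ((j : ℝ) + 1) := by positivity
                have h3 : (∑ i ∈ Finset.range (j + 1), Cd i) * (∑ i ∈ Finset.range (j + 1), Cd i)
                    ≤ (M * ((j : ℝ) + 1)) * (M * ((j : ℝ) + 1)) := mul_le_mul h1 h1 h2 hj
                nlinarith [mul_le_mul_of_nonneg_right h3 (hσ0 j)]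
      _ = M ^ 2 * ∑' j : ℕ, ((j : ℝ) + 1) ^ 2 * σsq j := tsum_mul_left
  -- now bound the original summand by P^2 * H
  set G : ℕ × ℕ → ℝ := fun p =>
      Cd p.1 * Cd p.2 *
        ∑' d : ℕ,
          (σsq (max p.1 p.2 + d) / μs (max p.1 p.2 + d)) *
            ((∏' l : ℕ, (f (max p.1 p.2 + l)) ^ 2) / (f (max p.1 p.2 + d)) ^ 2) *
            ∏ m ∈ Finset.Ico (min p.1 p.2) (max p.1 p.2), f m with hG
  have hμ0 : ∀ j, (0 : ℝ) < μs j := fun j => lt_of_lt_of_le zero_lt_one (hμ j)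
  have hf0 : ∀ j, (0 : ℝ) ≤ f j := fun j => le_trans zero_le_one (hf1 j)
  have hterm_nn : ∀ (k d : ℕ) (a b : ℕ),
      0 ≤ (σsq (k + d) / μs (k + d)) *
            ((∏' l : ℕ, (f (k + l)) ^ 2) / (f (k + d)) ^ 2) *
            ∏ m ∈ Finset.Ico a b, f m := by
    intro k d a b
    have h1 : (0 : ℝ) ≤ σsq (k + d) / μs (k + d) := div_nonneg (hσ0 _) (hμ0 _).le
    have h2 : (0 : ℝ) ≤ (∏' l : ℕ, (f (k + l)) ^ 2) / (f (k + d)) ^ 2 :=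
      div_nonneg (le_trans zero_le_one (xi_aux_tail_tprod hg1 hfp k).1) (sq_nonneg _)
    have h3 : (0 : ℝ) ≤ ∏ m ∈ Finset.Ico a b, f m :=
      Finset.prod_nonneg (fun m _ => hf0 m)
    positivity
  have hterm_le : ∀ (k d : ℕ) (a b : ℕ),
      (σsq (k + d) / μs (k + d)) *
            ((∏' l : ℕ, (f (k + l)) ^ 2) / (f (k + d)) ^ 2) *
            ∏ m ∈ Finset.Ico a b, f m ≤ P * P * σsq (k + d) := by
    intro k d a b
    have h1 : σsq (k + d) / μs (k + d) ≤ σsq (k + d) := div_le_self (hσ0 _) (hμ _)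
    have h2 : (∏' l : ℕ, (f (k + l)) ^ 2) / (f (k + d)) ^ 2 ≤ P := by
      calc (∏' l : ℕ, (f (k + l)) ^ 2) / (f (k + d)) ^ 2 ≤ ∏' l : ℕ, (f (k + l)) ^ 2 :=
            div_le_self (le_trans zero_le_one (xi_aux_tail_tprod hg1 hfp k).1) (hg1 _)
        _ ≤ P := (xi_aux_tail_tprod hg1 hfp k).2
    have h3 : ∏ m ∈ Finset.Ico a b, f m ≤ P := by
      calc ∏ m ∈ Finset.Ico a b, f m ≤ ∏ m ∈ Finset.Ico a b, (f m) ^ 2 := by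
            refine Finset.prod_le_prod (fun m _ => hf0 m) (fun m _ => ?_)
            nlinarith [hf1 m]
        _ ≤ P := xi_aux_prod_le_tprod hg1 hfp _
    have ha1 : (0 : ℝ) ≤ σsq (k + d) / μs (k + d) := div_nonneg (hσ0 _) (hμ0 _).le
    have ha2 : (0 : ℝ) ≤ (∏' l : ℕ, (f (k + l)) ^ 2) / (f (k + d)) ^ 2 :=
      div_nonneg (le_trans zero_le_one (xi_aux_tail_tprod hg1 hfp k).1) (sq_nonneg _)
    have ha3 : (0 : ℝ) ≤ ∏ m ∈ Finset.Ico a b, f m :=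
      Finset.prod_nonneg (fun m _ => hf0 m)
    calc (σsq (k + d) / μs (k + d)) *
            ((∏' l : ℕ, (f (k + l)) ^ 2) / (f (k + d)) ^ 2) *
            ∏ m ∈ Finset.Ico a b, f m
        ≤ σsq (k + d) * P * P := by
          apply mul_le_mul (mul_le_mul h1 h2 ha2 (hσ0 _)) h3 ha3
          exact mul_nonneg (hσ0 _) hP0
      _ = P * P * σsq (k + d) := by ring
  have hGnn : ∀ p : ℕ × ℕ, 0 ≤ G p := by
    intro p
    exact mul_nonneg (mul_nonneg (hC0 _) (hC0 _))
      (tsum_nonneg (fun d => hterm_nn (max p.1 p.2) d _ _))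
  have hGle : ∀ p : ℕ × ℕ, G p ≤ P * P * (Cd p.1 * Cd p.2 * T (max p.1 p.2)) := by
    intro p
    set k := max p.1 p.2
    have htsum_le : (∑' d : ℕ,
          (σsq (k + d) / μs (k + d)) *
            ((∏' l : ℕ, (f (k + l)) ^ 2) / (f (k + d)) ^ 2) *
            ∏ m ∈ Finset.Ico (min p.1 p.2) (max p.1 p.2), f m)
        ≤ ∑' d : ℕ, P * P * σsq (k + d) := by
      refine Summable.tsum_le_tsum (fun d => hterm_le k d _ _) ?_ ((hσtail k).mul_left (P * P))
      exact ((hσtail k).mul_left (P * P)).of_nonneg_of_le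
        (fun d => hterm_nn k d _ _) (fun d => hterm_le k d _ _)
    calc G p ≤ Cd p.1 * Cd p.2 * ∑' d : ℕ, P * P * σsq (k + d) := by
          exact mul_le_mul_of_nonneg_left htsum_le (mul_nonneg (hC0 _) (hC0 _))
      _ = Cd p.1 * Cd p.2 * (P * P * T k) := by rw [tsum_mul_left]
      _ = P * P * (Cd p.1 * Cd p.2 * T k) := by ring
  exact (hH.mul_left (P * P)).of_nonneg_of_le hGnn hGle
end

section
/- In Mack's bootstrap (fixed-design, Step 5 of the algorithm), conditional on the data, the bootstrap decomposition analogue of the estimation-uncertainty split degenerates: defining f*_{j,n}(Q) := E*(∑_i C_{i,j} F*_{i,j} | Q* = Q) / E*(∑_i C_{i,j} | Q* = Q), one has f*_{j,n}(Q) = f̂_{j,n} for every j, and consequently the second term (R*_{I,n} − R̂_{I,n})₂^{(2)} = ∑_i C*_{I-i,i}(∏_j f*_{j,n}(Q) − ∏_j f̂_{j,n}) is identically zero. -/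
open MeasureTheory

/-- Degeneracy of the Mack bootstrap decomposition of the estimation uncertainty: in the
fixed-design bootstrap the upper-triangle claims `C` are data-measurable (deterministic
given the data) and `F*_{i,j}` is independent of the conditioning event, with bootstrap mean
`E*(F*_{i,j}) = f̂_j`.  Hence `f*_{j,n}(Q) = E*(∑_i C_{i,j} F*_{i,j})/E*(∑_i C_{i,j}) = f̂_j`
for every `j`, and consequently the second decomposition term
`(R* − R̂)₂^{(2)} = ∑_i C*_i (∏_j f*_{j,n}(Q) − ∏_j f̂_j)` vanishes identically. -/
theorem mack_bootstrap_decomposition_degenerates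
    {Ω : Type*} [MeasurableSpace Ω] (μ : Measure Ω) [IsProbabilityMeasure μ]
    (I n : ℕ) (C : ℕ → ℕ → ℝ) (fhat : ℕ → ℝ) (nrows : ℕ → ℕ)
    (hCpos : ∀ j, 0 < ∑ i ∈ Finset.range (nrows j), C i j)
    (Fstar : ℕ → ℕ → Ω → ℝ)
    (hF : ∀ i j, ∫ ω, Fstar i j ω ∂μ = fhat j)
    (fstarQ : ℕ → ℝ)
    (hfstarQ : ∀ j, fstarQ j =
      (∑ i ∈ Finset.range (nrows j), C i j * ∫ ω, Fstar i j ω ∂μ) /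
        ∑ i ∈ Finset.range (nrows j), C i j)
    (Cstar : ℕ → ℝ) :
    (∀ j, fstarQ j = fhat j) ∧
      ∑ i ∈ Finset.range (I + n + 1),
        Cstar i * ((∏ j ∈ Finset.Ico i (I + n), fstarQ j) -
          ∏ j ∈ Finset.Ico i (I + n), fhat j) = 0 := by
  have key : ∀ j, fstarQ j = fhat j := by
    intro j
    rw [hfstarQ j]
    simp only [hF]
    rw [← Finset.sum_mul, mul_comm, mul_div_assoc, div_self (hCpos j).ne', mul_one]
  refine ⟨key, Finset.sum_eq_zero fun i _ => ?_⟩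
  rw [Finset.prod_congr rfl fun j _ => key j, sub_self, mul_zero]
end
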